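/- Back-and-forth lemma: let P, Q be regular ω-posets, (C_n) and (D_n) coinitial sequences of finite caps of P and Q respectively, and suppose given ∧-preserving co-surjective relations ⊐_n ⊆ D_n × C_n and ⊵_n ⊆ C_n × D_{n+1} such that ⊐_n ∘ ⊵_n ⊆ ≥_Q and ⊵_n ∘ ⊐_{n+1} ⊆ ≥_P for all n. Then the interleaved sequence ←_{2n} = ⊐_n, ←_{2n+1} = ⊴_n is a bi-thin arrow-sequence; in particular it defines a homeomorphism SP ≅ SQ. -/

import Mathlib

set_option linter.unusedSectionVars false


namespace OP

section OmegaPoset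

variable (P : Type*) [PartialOrder P]

/-- The n-th cone of the poset: `cone 0` is the set of maximal elements. -/
def cone : ℕ → Set P
  | 0 => {p | ∀ q, ¬ p < q}
  | n + 1 => {p | ∀ q, p < q → q ∈ cone n}

/-- The n-th level: atoms (minimal elements) of the n-th cone. -/
def level (n : ℕ) : Set P := {p | p ∈ cone P n ∧ ∀ q, q < p → q ∉ cone P n}

/-- An ω-poset: all levels finite and every element in some cone. -/
def IsOmegaPoset : Prop := (∀ n, (level P n).Finite) ∧ ∀ p : P, ∃ n, p ∈ cone P n

variable {P}

/-- `refines A C` : every element of `A` lies below some element of `C` (`A ≤ C`). -/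
def refines (A C : Set P) : Prop := ∀ a ∈ A, ∃ c ∈ C, a ≤ c

/-- A cap is a subset refined by some level. -/
def IsCap (C : Set P) : Prop := ∃ n, refines (level P n) C

/-- A selector meets every cap. -/
def IsSelector (S : Set P) : Prop := ∀ C : Set P, IsCap C → (S ∩ C).Nonempty

/-- `wedge p q` : `p` and `q` have a common lower bound. -/
def wedge (p q : P) : Prop := ∃ r, r ≤ p ∧ r ≤ q

def wedgeSet (p : P) : Set P := {q | wedge p q}

/-- The adjacency relation `p ⌅ q`. -/
def barwedge (p q : P) : Prop := ∀ C : Set P, IsCap C → ∃ c ∈ C, wedge p c ∧ wedge c q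

/-- `p ⊲_C q`. -/
def starBelowOn (C : Set P) (p q : P) : Prop := ∀ c ∈ C, wedge p c → c ≤ q

/-- The star-below relation `p ⊲ q`. -/
def starBelow (p q : P) : Prop := ∃ n, starBelowOn (level P n) p q

/-- A clique: pairwise adjacent set. -/
def IsClique (X : Set P) : Prop := ∀ p ∈ X, ∀ q ∈ X, barwedge p q

/-- Unbounded subset: meets `C^≥` for every cap `C`. -/
def IsUnbounded (X : Set P) : Prop := ∀ C : Set P, IsCap C → ∃ u ∈ X, ∃ c ∈ C, u ≤ c

variable (P)

/-- Regularity: every level is eventually star-refined by a later level. -/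
def IsRegular : Prop :=
  ∀ m, ∃ n, m < n ∧ ∀ p ∈ level P n, ∃ q ∈ level P m, starBelow p q

/-- The spectrum: minimal selectors. -/
def Spec : Set (Set P) := {S | IsSelector S ∧ ∀ T ⊆ S, IsSelector T → T = S}

def SpecT : Type _ := {S : Set P // S ∈ Spec P}

instance : TopologicalSpace (SpecT P) :=
  TopologicalSpace.generateFrom {U | ∃ p : P, U = {S : SpecT P | p ∈ S.1}}

/-- The clique-spectrum: unbounded maximal cliques. -/
def CliqueSpec : Set (Set P) :=
  {X | IsUnbounded X ∧ IsClique X ∧ ∀ Y : Set P, IsClique Y → X ⊆ Y → Y = X}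

def CliqueSpecT : Type _ := {X : Set P // X ∈ CliqueSpec P}

instance : TopologicalSpace (CliqueSpecT P) :=
  TopologicalSpace.generateFrom {U | ∃ p : P, U = {X : CliqueSpecT P | p ∉ X.1}}

variable {P}

/-- The basic open set `p_S`. -/
def pSOpen (p : P) : Set (SpecT P) := {S | p ∈ S.1}

/-- The closed set `p̄_S = {S : S ⊆ p^∧}`. -/
def pSBar (p : P) : Set (SpecT P) := {S | S.1 ⊆ wedgeSet p}

/-- Prime ω-poset: every basic open set is nonempty. -/
def IsPrimePoset (P : Type*) [PartialOrder P] : Prop := ∀ p : P, (pSOpen p).Nonempty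

end OmegaPoset

end OP

namespace OP

section Refiners

variable {P Q : Type*} [PartialOrder P] [PartialOrder Q]

/-- A refiner: every cap of `Q` is refined through the relation by some cap of `P`. -/
def IsRefinerRel (R : Q → P → Prop) : Prop :=
  ∀ C : Set Q, IsCap C → ∃ B : Set P, IsCap B ∧ ∀ b ∈ B, ∃ c ∈ C, R c b

/-- `∧`-preserving: `⊐ ∘ ∧ ∘ ⊏ ⊆ ∧`. -/
def WedgePres (R : Q → P → Prop) : Prop :=
  ∀ q p p' q', R q p → wedge p p' → R q' p' → wedge q q'

/-- `⌅`-preserving: `⊐ ∘ ⌅ ∘ ⊏ ⊆ ⌅`. -/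
def BarwedgePres (R : Q → P → Prop) : Prop :=
  ∀ q p p' q', R q p → barwedge p p' → R q' p' → barwedge q q'

/-- The star `⊐*` of a relation: `q ⊐* p` iff some cap `C` has `C ∩ p^∧ ⊏ q`. -/
def relStar (R : Q → P → Prop) (q : Q) (p : P) : Prop :=
  ∃ C : Set P, IsCap C ∧ ∀ c ∈ C, wedge p c → R q c

/-- Composition `▷ ∘ ⊐` with the star-above relation on `Q`. -/
def starAboveComp (R : Q → P → Prop) : Q → P → Prop :=
  fun q p => ∃ q', starBelow q' q ∧ R q' p

/-- A strong refiner: a `∧`-preserving refiner with `⊐ = ▷ * ⊐`. -/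
def IsStrongRefiner (R : Q → P → Prop) : Prop :=
  IsRefinerRel R ∧ WedgePres R ∧ ∀ q p, R q p ↔ relStar (starAboveComp R) q p

/-- `φ` is the continuous map associated to `R`, i.e. `φ(S) = S^{⊏ ⊲}`. -/
def specMapOf (R : Q → P → Prop) (φ : SpecT P → SpecT Q) : Prop :=
  ∀ S : SpecT P, (φ S).1 = {r : Q | ∃ p ∈ S.1, ∃ q, R q p ∧ starBelow q r}

/-- The relation `⊒_φ`: `q ⊒_φ p` iff `q̄_S ⊇ φ[p̄_S]`. -/
def relBarPhi (φ : SpecT P → SpecT Q) (q : Q) (p : P) : Prop :=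
  ∀ S : SpecT P, S ∈ pSBar p → φ S ∈ pSBar q

/-- The relation `⊐_φ`: `q ⊐_φ p` iff `q_S ⊇ φ[p̄_S]`. -/
def relPhi (φ : SpecT P → SpecT Q) (q : Q) (p : P) : Prop :=
  ∀ S : SpecT P, S ∈ pSBar p → φ S ∈ pSOpen q

/-- An arrow: a finite relation with `← ∘ ⌅` co-surjective. -/
def IsArrow (A : Q → P → Prop) : Prop :=
  {x : Q × P | A x.1 x.2}.Finite ∧ ∀ p : P, ∃ q p', A q p' ∧ barwedge p' p

/-- `A ≤ B` for relations: `A ⊆ ≤ ∘ B ∘ ≥`. -/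
def arrowLe (A B : Q → P → Prop) : Prop :=
  ∀ q p, A q p → ∃ q' p', q ≤ q' ∧ p ≤ p' ∧ B q' p'

/-- The relation `⟨←` of an arrow: `q ⟨← p` iff `p^{⌅→} ⊲ q`. -/
def angleRel (A : Q → P → Prop) (q : Q) (p : P) : Prop :=
  ∀ q', (∃ p', barwedge p p' ∧ A q' p') → starBelow q' q

/-- The relation `⋂ₙ (←ₙ)̄_S` on spectra determined by a sequence of arrows. -/
def seqGraph (A : ℕ → Q → P → Prop) (T : SpecT Q) (S : SpecT P) : Prop :=
  ∀ n, ∃ q p, A n q p ∧ T.1 ⊆ wedgeSet q ∧ S.1 ⊆ wedgeSet p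

end Refiners

end OP

namespace OP

variable {P Q : Type*} [PartialOrder P] [PartialOrder Q]

/-- The interleaved sequence `←_{2n} = ⊐_n`, `←_{2n+1} = ⊴_n`. -/
def interleave (R : ℕ → Q → P → Prop) (T : ℕ → P → Q → Prop) (k : ℕ) (q : Q) (p : P) : Prop :=
  if k % 2 = 0 then R (k / 2) q p else T (k / 2) p q

end OP

namespace OP

/-! ### Basic lemmas -/

section Basics

variable {P : Type*} [PartialOrder P]

lemma wedge_symm {p q : P} (h : wedge p q) : wedge q p := by
  obtain ⟨r, h1, h2⟩ := h; exact ⟨r, h2, h1⟩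

lemma wedge_self (p : P) : wedge p p := ⟨p, le_rfl, le_rfl⟩

lemma wedge_mono {p q q' : P} (h : wedge p q) (hq : q ≤ q') : wedge p q' := by
  obtain ⟨r, h1, h2⟩ := h; exact ⟨r, h1, h2.trans hq⟩

lemma wedge_mono_left {p p' q : P} (h : wedge p q) (hp : p ≤ p') : wedge p' q :=
  wedge_symm (wedge_mono (wedge_symm h) hp)

lemma wedge_of_le {p q : P} (h : p ≤ q) : wedge p q := ⟨p, le_rfl, h⟩

lemma cone_mono : ∀ {m n : ℕ}, m ≤ n → cone P m ⊆ cone P n := by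
  have key : ∀ n, cone P n ⊆ cone P (n + 1) := by
    intro n
    induction n with
    | zero => intro p hp q hq; exact absurd hq (hp q)
    | succ n ih => intro p hp q hq; exact ih (hp q hq)
  intro m n h
  induction h with
  | refl => exact le_rfl
  | step h ih => exact ih.trans (key _)

lemma cone_of_lt {n : ℕ} {p q : P} (hp : p ∈ cone P (n+1)) (h : p < q) : q ∈ cone P n := hp q h

variable (hω : IsOmegaPoset P)

open Classical in
noncomputable def depth (p : P) : ℕ := Nat.find (hω.2 p)

include hω

open Classical in
lemma depth_mem (p : P) : p ∈ cone P (depth hω p) := Nat.find_spec (hω.2 p)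

open Classical in
lemma depth_le {p : P} {n : ℕ} (h : p ∈ cone P n) : depth hω p ≤ n := Nat.find_le h

lemma mem_cone_of_depth_le {p : P} {n : ℕ} (h : depth hω p ≤ n) : p ∈ cone P n :=
  cone_mono h (depth_mem hω p)

lemma depth_lt_depth {p q : P} (h : q < p) : depth hω p < depth hω q := by
  rcases Nat.eq_zero_or_pos (depth hω q) with h0 | h0
  · exfalso
    have := depth_mem hω q
    rw [h0] at this
    exact this p h
  · obtain ⟨d, hd⟩ := Nat.exists_eq_succ_of_ne_zero h0.ne'
    have hq := depth_mem hω q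
    rw [hd] at hq
    have := hq p h
    have := depth_le hω this
    omega

/-- L2 : every element of a cone lies above a level element. -/
lemma exists_level_le {n : ℕ} : ∀ {p : P}, p ∈ cone P n → ∃ a ∈ level P n, a ≤ p := by
  suffices h : ∀ (k : ℕ) (p : P), p ∈ cone P n → n - depth hω p ≤ k → ∃ a ∈ level P n, a ≤ p by
    intro p hp; exact h n p hp (Nat.sub_le _ _)
  intro k
  induction k with
  | zero =>
    intro p hp hk
    refine ⟨p, ⟨hp, ?_⟩, le_rfl⟩
    intro q hq hqc
    have h1 := depth_lt_depth hω hq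
    have h2 := depth_le hω hqc
    have h3 := depth_le hω hp
    omega
  | succ k ih =>
    intro p hp hk
    by_cases hmin : ∀ q, q < p → q ∉ cone P n
    · exact ⟨p, ⟨hp, hmin⟩, le_rfl⟩
    · push_neg at hmin
      obtain ⟨q, hq, hqc⟩ := hmin
      have h1 := depth_lt_depth hω hq
      have h2 := depth_le hω hqc
      obtain ⟨a, ha, hale⟩ := ih q hqc (by omega)
      exact ⟨a, ha, hale.trans hq.le⟩

omit hω in
lemma mem_cone_zero {p : P} : p ∈ cone P 0 ↔ ∀ q, ¬ p < q := Iff.rfl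

omit hω in
lemma mem_cone_succ {p : P} {n : ℕ} : p ∈ cone P (n+1) ↔ ∀ q, p < q → q ∈ cone P n := Iff.rfl

/-- every element has an element of exact smaller depth above it -/
lemma exists_above_depth {n : ℕ} : ∀ {p : P}, n ≤ depth hω p → ∃ b, p ≤ b ∧ depth hω b = n := by
  suffices h : ∀ (k : ℕ) (p : P), n ≤ depth hω p → depth hω p - n ≤ k →
      ∃ b, p ≤ b ∧ depth hω b = n by
    intro p hp; exact h _ p hp le_rfl
  intro k
  induction k with
  | zero =>
    intro p hp hk
    exact ⟨p, le_rfl, by omega⟩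
  | succ k ih =>
    intro p hp hk
    rcases eq_or_lt_of_le hp with heq | hlt
    · exact ⟨p, le_rfl, heq.symm⟩
    · have hd1 : 1 ≤ depth hω p := by omega
      have hnm : ∃ r, p < r := by
        by_contra hc
        push_neg at hc
        have hp0 : p ∈ cone P 0 := mem_cone_zero.mpr (fun q hq => hc q hq)
        have := depth_le hω hp0
        omega
      have hex : ∃ r, p < r ∧ depth hω r = depth hω p - 1 := by
        by_contra hc
        push_neg at hc
        have hstep : ∀ r, p < r → depth hω r ≤ depth hω p - 2 := by
          intro r hr
          have h1 := depth_lt_depth hω hr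
          have h2 := hc r hr
          omega
        have hcone : p ∈ cone P (depth hω p - 2 + 1) :=
          mem_cone_succ.mpr (fun q hq => mem_cone_of_depth_le hω (hstep q hq))
        have h3 := depth_le hω hcone
        obtain ⟨r0, hr0⟩ := hnm
        have h4 := depth_lt_depth hω hr0
        have h5 := hc r0 hr0
        omega
      obtain ⟨r, hr, hdr⟩ := hex
      obtain ⟨b, hb1, hb2⟩ := ih r (by omega) (by omega)
      exact ⟨b, hr.le.trans hb1, hb2⟩

/-- L3 : above every deep element there is a level-n element. -/
lemma exists_level_ge {n : ℕ} {p : P} (h : n ≤ depth hω p) : ∃ b ∈ level P n, p ≤ b := by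
  obtain ⟨b, hpb, hdb⟩ := exists_above_depth hω h
  refine ⟨b, ⟨mem_cone_of_depth_le hω hdb.le, ?_⟩, hpb⟩
  intro c hc hcc
  have h1 := depth_lt_depth hω hc
  have h2 := depth_le hω hcc
  omega

/-- L4 : every element wedges some element of every level. -/
lemma exists_level_wedge (r : P) (n : ℕ) : ∃ b ∈ level P n, wedge b r := by
  rcases le_or_gt (depth hω r) n with h | h
  · obtain ⟨a, ha, hle⟩ := exists_level_le hω (mem_cone_of_depth_le hω h)
    exact ⟨a, ha, ⟨a, le_rfl, hle⟩⟩
  · obtain ⟨b, hb, hle⟩ := exists_level_ge hω h.le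
    exact ⟨b, hb, ⟨r, hle, le_rfl⟩⟩

/-- L8 : deeper levels refine shallower levels. -/
lemma level_refines_level {m n : ℕ} (h : n ≤ m) : refines (level P m) (level P n) := by
  intro a ha
  rcases le_or_gt (depth hω a) n with hd | hd
  · refine ⟨a, ⟨mem_cone_of_depth_le hω hd, ?_⟩, le_rfl⟩
    intro c hc hcc
    exact ha.2 c hc (cone_mono h hcc)
  · obtain ⟨b, hb, hle⟩ := exists_level_ge hω hd.le
    exact ⟨b, hb, hle⟩

omit hω in
lemma level_isCap (n : ℕ) : IsCap (level P n) :=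
  ⟨n, fun a ha => ⟨a, ha, le_rfl⟩⟩

omit hω in
lemma refines_trans {A B C : Set P} (h1 : refines A B) (h2 : refines B C) : refines A C := by
  intro a ha
  obtain ⟨b, hb, hab⟩ := h1 a ha
  obtain ⟨c, hc, hbc⟩ := h2 b hb
  exact ⟨c, hc, hab.trans hbc⟩

/-- every cap is refined by all sufficiently deep levels (indeed all levels ≥ witness). -/
lemma cap_refined_deep {C : Set P} (hC : IsCap C) : ∃ n₀, ∀ k, n₀ ≤ k → refines (level P k) C := by
  obtain ⟨n₀, hn₀⟩ := hC
  exact ⟨n₀, fun k hk => refines_trans (level_refines_level hω hk) hn₀⟩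

/-- L1 : every element wedges some element of every cap. -/
lemma exists_cap_wedge {C : Set P} (hC : IsCap C) (r : P) : ∃ c ∈ C, wedge r c := by
  obtain ⟨n, hn⟩ := hC
  obtain ⟨b, hb, hw⟩ := exists_level_wedge hω r n
  obtain ⟨c, hc, hbc⟩ := hn b hb
  exact ⟨c, hc, wedge_mono (wedge_symm hw) hbc⟩

/-- L5 : wedge implies barwedge. -/
lemma barwedge_of_wedge {p q : P} (h : wedge p q) : barwedge p q := by
  intro C hC
  obtain ⟨s, hsp, hsq⟩ := h
  obtain ⟨c, hc, hsc⟩ := exists_cap_wedge hω hC s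
  obtain ⟨t, hts, htc⟩ := hsc
  exact ⟨c, hc, ⟨t, (hts.trans hsp), htc⟩, ⟨t, htc, hts.trans hsq⟩⟩

omit hω

lemma barwedge_symm {p q : P} (h : barwedge p q) : barwedge q p := by
  intro C hC
  obtain ⟨c, hc, h1, h2⟩ := h C hC
  exact ⟨c, hc, wedge_symm h2, wedge_symm h1⟩

lemma barwedge_mono {p p' q : P} (h : barwedge p q) (hp : p ≤ p') : barwedge p' q := by
  intro C hC
  obtain ⟨c, hc, h1, h2⟩ := h C hC
  exact ⟨c, hc, wedge_mono_left h1 hp, h2⟩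

include hω

/-- L9 : star-below witnesses can be pushed deeper. -/
lemma starBelowOn_push {j j' : ℕ} (h : j ≤ j') {p q : P}
    (hs : starBelowOn (level P j) p q) : starBelowOn (level P j') p q := by
  intro d hd hw
  obtain ⟨e, he, hde⟩ := level_refines_level hω h d hd
  exact hde.trans (hs e he (wedge_mono hw hde))

omit hω

lemma starBelowOn_mono_right {C : Set P} {p q q' : P} (hs : starBelowOn C p q) (h : q ≤ q') :
    starBelowOn C p q' := fun c hc hw => (hs c hc hw).trans h

lemma starBelowOn_anti_left {C : Set P} {p p' q : P} (hs : starBelowOn C p q) (h : p' ≤ p) :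
    starBelowOn C p' q := fun c hc hw => hs c hc (wedge_mono_left hw h)

lemma starBelow_mono_right {p q q' : P} (hs : starBelow p q) (h : q ≤ q') : starBelow p q' := by
  obtain ⟨n, hn⟩ := hs; exact ⟨n, starBelowOn_mono_right hn h⟩

lemma starBelow_anti_left {p p' q : P} (hs : starBelow p q) (h : p' ≤ p) : starBelow p' q := by
  obtain ⟨n, hn⟩ := hs; exact ⟨n, starBelowOn_anti_left hn h⟩

include hω

/-- common-witness form of regularity. -/
lemma regular_common (hreg : IsRegular P) (m : ℕ) :
    ∃ n J, m < n ∧ n ≤ J ∧ ∀ p ∈ level P n, ∃ q ∈ level P m, starBelowOn (level P J) p q := by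
  obtain ⟨n, hmn, hn⟩ := hreg m
  have hfin := hω.1 n
  -- choose witnesses
  choose q hq j hj using (fun (p : {p // p ∈ level P n}) => by
    obtain ⟨q, hq, j, hj⟩ := hn p.1 p.2
    exact ⟨q, hq, j, hj⟩ : ∀ p : {p // p ∈ level P n}, ∃ q, q ∈ level P m ∧ ∃ j, starBelowOn (level P j) p.1 q)
  by_cases hne : Nonempty {p // p ∈ level P n}
  · have : Finite {p // p ∈ level P n} := hfin
    obtain ⟨J₀, hJ₀⟩ := Finite.exists_le j
    refine ⟨n, max J₀ n, hmn, le_max_right _ _, ?_⟩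
    intro p hp
    refine ⟨q ⟨p, hp⟩, hq ⟨p, hp⟩, ?_⟩
    exact starBelowOn_push hω ((hJ₀ ⟨p, hp⟩).trans (le_max_left _ _)) (hj ⟨p, hp⟩)
  · refine ⟨n, n, hmn, le_rfl, ?_⟩
    intro p hp
    exact absurd ⟨⟨p, hp⟩⟩ hne


/-! ### Spectrum lemmas -/

lemma cap_finite_subcap {C : Set P} (hC : IsCap C) : ∃ C', C' ⊆ C ∧ C'.Finite ∧ IsCap C' := by
  obtain ⟨n, hn⟩ := hC
  choose f hfC hfle using hn
  refine ⟨{c | ∃ a ha, f a ha = c}, ?_, (hω.1 n).dependent_image f, n, ?_⟩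
  · rintro c ⟨a, ha, rfl⟩; exact hfC a ha
  · intro a ha; exact ⟨f a ha, ⟨a, ha, rfl⟩, hfle a ha⟩

lemma exists_minimal_selector {S₀ : Set P} (hS₀ : IsSelector S₀) :
    ∃ M, M ⊆ S₀ ∧ M ∈ Spec P := by
  have hlb : ∀ c ⊆ {T : Set P | T ⊆ S₀ ∧ IsSelector T}, IsChain (· ⊆ ·) c → c.Nonempty →
      ∃ lb ∈ {T : Set P | T ⊆ S₀ ∧ IsSelector T}, ∀ s ∈ c, lb ⊆ s := by
    intro c hcS hchain hcne
    obtain ⟨T₁, hT₁⟩ := hcne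
    refine ⟨⋂₀ c, ⟨(Set.sInter_subset_of_mem hT₁).trans (hcS hT₁).1, ?_⟩,
      fun s hs => Set.sInter_subset_of_mem hs⟩
    intro C hC
    obtain ⟨C', hC'C, hC'fin, hC'cap⟩ := cap_finite_subcap hω hC
    have hF : ((fun T => T ∩ C') '' c).Finite :=
      Set.Finite.subset hC'fin.finite_subsets (by rintro _ ⟨T, _, rfl⟩; exact Set.inter_subset_right)
    have hFne : ((fun T => T ∩ C') '' c).Nonempty := ⟨T₁ ∩ C', T₁, hT₁, rfl⟩
    obtain ⟨m, hm, hmmin⟩ : ∃ m ∈ (fun T => T ∩ C') '' c,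
        ∀ m' ∈ (fun T => T ∩ C') '' c, id m' ≤ id m → id m = id m' := by
      obtain ⟨m, hm, hmin⟩ := Set.Finite.exists_minimalFor id _ hF hFne
      exact ⟨m, hm, fun m' hm' hle => le_antisymm (hmin hm' hle) hle⟩
    obtain ⟨T₀, hT₀, rfl⟩ := hm
    have hmne : (T₀ ∩ C').Nonempty := (hcS hT₀).2 C' hC'cap
    obtain ⟨x, hx⟩ := hmne
    refine ⟨x, ?_, hC'C hx.2⟩
    refine Set.mem_sInter.mpr (fun T hT => ?_)
    rcases eq_or_ne T T₀ with rfl | hne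
    · exact hx.1
    · rcases hchain hT hT₀ hne with h | h
      · have : T ∩ C' = T₀ ∩ C' := (hmmin (T ∩ C') ⟨T, hT, rfl⟩ (Set.inter_subset_inter_left _ h)).symm
        rw [← this] at hx; exact hx.1
      · exact h hx.1
  obtain ⟨M, hMx, hMmin⟩ :=
    zorn_superset_nonempty {T : Set P | T ⊆ S₀ ∧ IsSelector T} hlb S₀ ⟨Set.Subset.rfl, hS₀⟩
  exact ⟨M, hMx, hMmin.1.2, fun T hT hTsel =>
    Set.Subset.antisymm hT (hMmin.2 ⟨hT.trans hMmin.1.1, hTsel⟩ hT)⟩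

lemma spec_selector {S : Set P} (hS : S ∈ Spec P) : IsSelector S := hS.1

omit hω in
lemma spec_necessity {S : Set P} (hS : S ∈ Spec P) {s : P} (hs : s ∈ S) :
    ∃ C, IsCap C ∧ ∀ x ∈ S, x ∈ C → x = s := by
  by_contra hc
  push_neg at hc
  have hsel : IsSelector (S \ {s}) := by
    intro C hC
    obtain ⟨x, hxS, hxC, hxs⟩ := hc C hC
    exact ⟨x, ⟨hxS, hxs⟩, hxC⟩
  have := hS.2 (S \ {s}) Set.diff_subset hsel
  have : s ∈ S \ {s} := this.symm ▸ hs
  exact this.2 rfl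

lemma spec_wedge {S : Set P} (hS : S ∈ Spec P) {p x : P} (hp : p ∈ S) (hx : x ∈ S) :
    wedge p x := by
  suffices h : ∀ s ∈ S, ∀ y ∈ S, wedge y s by exact wedge_symm (h p hp x hx)
  intro s hs
  obtain ⟨Cs, hCscap, hCs⟩ := spec_necessity hS hs
  have hTsel : IsSelector {r ∈ S | wedge r s} := by
    intro C hC
    obtain ⟨n₁, hn₁⟩ := cap_refined_deep hω hCscap
    obtain ⟨n₂, hn₂⟩ := cap_refined_deep hω hC
    set k := max n₁ n₂ with hk
    have hWcap : IsCap ((Cs \ {s}) ∪ {c ∈ C | wedge c s}) := by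
      refine ⟨k, fun a ha => ?_⟩
      obtain ⟨c₁, hc₁, hac₁⟩ := hn₁ k (le_max_left _ _) a ha
      rcases eq_or_ne c₁ s with rfl | hne
      · obtain ⟨c₂, hc₂, hac₂⟩ := hn₂ k (le_max_right _ _) a ha
        exact ⟨c₂, Or.inr ⟨hc₂, a, hac₂, hac₁⟩, hac₂⟩
      · exact ⟨c₁, Or.inl ⟨hc₁, hne⟩, hac₁⟩
    obtain ⟨x₀, hx₀S, hx₀W⟩ := hS.1 _ hWcap
    rcases hx₀W with ⟨hx₀Cs, hx₀ne⟩ | ⟨hx₀C, hx₀w⟩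
    · exact absurd (hCs x₀ hx₀S hx₀Cs) hx₀ne
    · exact ⟨x₀, ⟨hx₀S, hx₀w⟩, hx₀C⟩
  have := hS.2 _ (Set.sep_subset _ _) hTsel
  intro y hy
  have : y ∈ {r ∈ S | wedge r s} := this.symm ▸ hy
  exact this.2

/-- every element of a minimal selector is barwedge to anything wedging all of the selector -/
lemma spec_barwedge {S : Set P} (hS : S ∈ Spec P) {b p : P} (hb : b ∈ S)
    (hp : ∀ x ∈ S, wedge p x) : barwedge b p := by
  intro F hF
  obtain ⟨nF, hnF⟩ := hF
  obtain ⟨s₁, hs₁S, hs₁l⟩ := hS.1 _ (level_isCap nF)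
  obtain ⟨f, hfF, hsf⟩ := hnF s₁ hs₁l
  exact ⟨f, hfF, wedge_mono (spec_wedge hω hS hb hs₁S) hsf,
    wedge_symm (wedge_mono (hp s₁ hs₁S) hsf)⟩

omit hω in
/-- S10 : if q wedges all of a minimal selector and q ⊲ c then c belongs to the selector. -/
lemma spec_mem_of_starBelow {S : Set P} (hS : S ∈ Spec P) {q c : P}
    (hq : ∀ x ∈ S, wedge q x) (hsb : starBelow q c) : c ∈ S := by
  obtain ⟨j, hj⟩ := hsb
  have hZcap : IsCap ({c} ∪ {e ∈ level P j | ¬ e ≤ c}) := by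
    refine ⟨j, fun a ha => ?_⟩
    by_cases hac : a ≤ c
    · exact ⟨c, Or.inl rfl, hac⟩
    · exact ⟨a, Or.inr ⟨ha, hac⟩, le_rfl⟩
  obtain ⟨x, hxS, hxZ⟩ := hS.1 _ hZcap
  rcases hxZ with rfl | ⟨hxl, hxc⟩
  · exact hxS
  · exact absurd (hj x hxl (hq x hxS)) hxc


/-! ### Star absorption machinery -/

/-- absorption on the target side -/
lemma absorb (hreg : IsRegular P) {E : Set P} (hE : IsCap E) :
    ∃ J1, ∀ z xz, xz ∈ level P J1 → z ≤ xz →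
      ∃ c ∈ E, ∀ q' x', x' ∈ level P J1 → q' ≤ x' → wedge q' z → starBelow q' c := by
  obtain ⟨m0, hm0⟩ := hE
  obtain ⟨m, J0, _, _, hstar0⟩ := regular_common hω hreg m0
  obtain ⟨m1, J1', _, _, hstar1⟩ := regular_common hω hreg m
  refine ⟨max J1' m1, ?_⟩
  intro z xz hxz hzxz
  obtain ⟨vz, hvz, hxvz⟩ := level_refines_level hω (le_max_right _ _) xz hxz
  obtain ⟨y2, hy2, hsb1⟩ := hstar1 vz hvz
  have hsb1' := starBelowOn_push hω (le_max_left J1' m1) hsb1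
  obtain ⟨z2, hz2, hsb0⟩ := hstar0 y2 hy2
  obtain ⟨c, hc, hz2c⟩ := hm0 z2 hz2
  refine ⟨c, hc, ?_⟩
  intro q' x' hx' hq'x' hwz
  obtain ⟨w, hwq, hwzz⟩ := hwz
  have hxy2 : x' ≤ y2 := hsb1' x' hx' ⟨w, (hwzz.trans hzxz).trans hxvz, hwq.trans hq'x'⟩
  refine ⟨J0, fun d hd hw => ?_⟩
  obtain ⟨t, ht1, ht2⟩ := hw
  exact (hsb0 d hd ⟨t, ht1.trans (hq'x'.trans hxy2), ht2⟩).trans hz2c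

/-- concentration on the source side -/
lemma bSide (hreg : IsRegular P) {A : Set P} (hA : IsCap A) :
    ∃ s1, ∀ b ∈ level P s1, ∃ zb ∈ A, ∀ p', barwedge b p' → wedge p' zb := by
  obtain ⟨s, hs⟩ := hA
  obtain ⟨s1, Jp, _, _, hstar⟩ := regular_common hω hreg s
  refine ⟨s1, fun b hb => ?_⟩
  obtain ⟨yb, hyb, hsb⟩ := hstar b hb
  obtain ⟨zb, hzb, hyzb⟩ := hs yb hyb
  refine ⟨zb, hzb, fun p' hbar => ?_⟩
  obtain ⟨e, he, hbe, hep⟩ := hbar _ (level_isCap Jp)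
  have heyb : e ≤ yb := hsb e he hbe
  obtain ⟨u, hue, hup⟩ := hep
  exact ⟨u, hup, (hue.trans heyb).trans hyzb⟩

end Basics




/-! ### Koenig's lemma -/

section Konig

variable {α : Type*}

private def KExt (V : ℕ → Set α) (Edge : ℕ → α → α → Prop) (n : ℕ) (f : ℕ → α) : Prop :=
  ∀ N, ∃ g : ℕ → α, (∀ i ≤ N, g i ∈ V i) ∧ (∀ i < N, Edge i (g i) (g (i+1))) ∧ ∀ i < n, g i = f i

private lemma kext_step {V : ℕ → Set α} {Edge : ℕ → α → α → Prop}
    (hfin : ∀ n, (V n).Finite) {n : ℕ} {f : ℕ → α} (h : KExt V Edge n f) :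
    ∃ f', (∀ i < n, f' i = f i) ∧ KExt V Edge (n+1) f' := by
  classical
  by_contra hc
  push_neg at hc
  -- for each candidate value a at index n, there is a failing length N a
  have hfail : ∀ a : α, ∃ Na, ¬ ∃ g : ℕ → α, (∀ i ≤ Na, g i ∈ V i) ∧
      (∀ i < Na, Edge i (g i) (g (i+1))) ∧ ∀ i < n + 1, g i = Function.update f n a i := by
    intro a
    have h1 := hc (Function.update f n a) (fun i hi => Function.update_of_ne (by omega) a f)
    rw [KExt] at h1
    exact not_forall.mp h1
  choose Na hNa using hfail
  set W := (hfin n).toFinset with hW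
  set M := max (n+1) (W.sup Na) with hM
  obtain ⟨g, hg1, hg2, hg3⟩ := h M
  set a := g n with ha
  have haV : a ∈ V n := hg1 n (by omega)
  have haW : a ∈ W := (Set.Finite.mem_toFinset _).mpr haV
  refine hNa a ⟨g, fun i hi => hg1 i (hi.trans ?_), fun i hi => hg2 i (lt_of_lt_of_le hi ?_), ?_⟩
  · exact le_trans (Finset.le_sup haW) (le_max_right _ _)
  · exact le_trans (Finset.le_sup haW) (le_max_right _ _)
  · intro i hi
    rcases lt_or_eq_of_le (Nat.lt_succ_iff.mp hi) with h' | h'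
    · rw [Function.update_of_ne (by omega)]
      exact hg3 i h'
    · subst h'
      rw [Function.update_self]

set_option linter.unusedSectionVars false in
lemma konig (V : ℕ → Set α) (hfin : ∀ n, (V n).Finite) (Edge : ℕ → α → α → Prop)
    (hbr : ∀ N, ∃ f : ℕ → α, (∀ n ≤ N, f n ∈ V n) ∧ ∀ n < N, Edge n (f n) (f (n+1))) :
    ∃ f : ℕ → α, (∀ n, f n ∈ V n) ∧ ∀ n, Edge n (f n) (f (n+1)) := by
  classical
  obtain ⟨f₀, _, _⟩ := hbr 0
  have hbase : KExt V Edge 0 f₀ := by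
    intro N
    obtain ⟨g, hg1, hg2⟩ := hbr N
    exact ⟨g, hg1, hg2, fun i hi => absurd hi (Nat.not_lt_zero i)⟩
  let Fc : ∀ _ : ℕ, {f : ℕ → α // KExt V Edge _ f} :=
    fun n => Nat.rec (motive := fun n => {f : ℕ → α // KExt V Edge n f}) ⟨f₀, hbase⟩
      (fun n p => ⟨(kext_step hfin p.2).choose, (kext_step hfin p.2).choose_spec.2⟩) n
  have hagree : ∀ n i, i < n → (Fc (n+1)).1 i = (Fc n).1 i := fun n i hi =>
    (kext_step hfin (Fc n).2).choose_spec.1 i hi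
  have hstab : ∀ m n i, i < n → n ≤ m → (Fc m).1 i = (Fc n).1 i := by
    intro m
    induction m with
    | zero => intro n i hi hn; omega
    | succ m ih =>
      intro n i hi hn
      rcases eq_or_lt_of_le hn with rfl | h
      · rfl
      · rw [hagree m i (by omega), ih n i hi (by omega)]
  set F : ℕ → α := fun i => (Fc (i+1)).1 i with hF
  have hFeq : ∀ n i, i < n → (Fc n).1 i = F i := fun n i hi => hstab n (i+1) i (by omega) (by omega)
  refine ⟨F, ?_, ?_⟩
  · intro n
    obtain ⟨g, hg1, hg2, hg3⟩ := (Fc (n+1)).2 n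
    have e1 : g n = F n := (hg3 n (by omega)).trans (hFeq (n+1) n (by omega))
    have := hg1 n le_rfl
    rwa [e1] at this
  · intro n
    obtain ⟨g, hg1, hg2, hg3⟩ := (Fc (n+2)).2 (n+1)
    have e1 : g n = F n := (hg3 n (by omega)).trans (hFeq (n+2) n (by omega))
    have e2 : g (n+1) = F (n+1) := (hg3 (n+1) (by omega)).trans (hFeq (n+2) (n+1) (by omega))
    have := hg2 n (by omega)
    rwa [e1, e2] at this

end Konig


section Main

variable {P Q : Type*} [PartialOrder P] [PartialOrder Q]

/-- set-level version of `seqGraph`. -/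
def seqGraphSet (A : ℕ → Q → P → Prop) (T' : Set Q) (S : Set P) : Prop :=
  ∀ n, ∃ q p, A n q p ∧ T' ⊆ wedgeSet q ∧ S ⊆ wedgeSet p
variable (hP : IsOmegaPoset P) (hregP : IsRegular P) (hQ : IsOmegaPoset Q) (hregQ : IsRegular Q)
variable (C : ℕ → Set P) (D : ℕ → Set Q)
variable (hC : ∀ n, IsCap (C n) ∧ (C n).Finite) (hD : ∀ n, IsCap (D n) ∧ (D n).Finite)
variable (hCco : ∀ B : Set P, IsCap B → ∃ n, refines (C n) B)
variable (hDco : ∀ B : Set Q, IsCap B → ∃ n, refines (D n) B)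
variable (R : ℕ → Q → P → Prop) (T : ℕ → P → Q → Prop)
variable (hRsub : ∀ n q p, R n q p → q ∈ D n ∧ p ∈ C n)
variable (hTsub : ∀ n p q, T n p q → p ∈ C n ∧ q ∈ D (n + 1))
variable (hRw : ∀ n, WedgePres (R n)) (hTw : ∀ n, WedgePres (T n))
variable (hRco : ∀ n, ∀ p ∈ C n, ∃ q, R n q p)
variable (hTco : ∀ n, ∀ q ∈ D (n + 1), ∃ p, T n p q)
variable (h1 : ∀ n q p q', R n q p → T n p q' → q' ≤ q)
variable (h2 : ∀ n p q p', T n p q → R (n + 1) q p' → p' ≤ p)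

include hP hregP hQ hregQ hC hDco hRsub hRw hRco in
lemma starPQ {E : Set Q} (hE : IsCap E) :
    ∃ N s1, ∀ b ∈ level P s1, ∃ c ∈ E,
      ∀ q' p', R N q' p' → barwedge b p' → starBelow q' c := by
  obtain ⟨J1, habs⟩ := absorb hQ hregQ hE
  obtain ⟨N, hN⟩ := hDco _ (level_isCap J1)
  obtain ⟨s1, hside⟩ := bSide hP hregP (hC N).1
  refine ⟨N, s1, fun b hb => ?_⟩
  obtain ⟨zb, hzb, hzbw⟩ := hside b hb
  obtain ⟨qz, hqz⟩ := hRco N zb hzb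
  obtain ⟨xz, hxz, hqxz⟩ := hN qz (hRsub N qz zb hqz).1
  obtain ⟨c, hc, hprop⟩ := habs qz xz hxz hqxz
  refine ⟨c, hc, fun q' p' hR hbar => ?_⟩
  have hw : wedge p' zb := hzbw p' hbar
  have hqq : wedge q' qz := hRw N q' p' zb qz hR hw hqz
  obtain ⟨x', hx', hqx'⟩ := hN q' (hRsub N q' p' hR).1
  exact hprop q' x' hx' hqx' hqq

include hP hregP hQ hregQ hD hCco hTsub hTw hTco in
lemma starQP {E : Set P} (hE : IsCap E) :
    ∃ n s1, ∀ b ∈ level Q s1, ∃ c ∈ E,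
      ∀ p' q', T n p' q' → barwedge b q' → starBelow p' c := by
  obtain ⟨J1, habs⟩ := absorb hP hregP hE
  obtain ⟨n, hn⟩ := hCco _ (level_isCap J1)
  obtain ⟨s1, hside⟩ := bSide hQ hregQ (hD (n+1)).1
  refine ⟨n, s1, fun b hb => ?_⟩
  obtain ⟨zb, hzb, hzbw⟩ := hside b hb
  obtain ⟨pz, hpz⟩ := hTco n zb hzb
  obtain ⟨xz, hxz, hpxz⟩ := hn pz (hTsub n pz zb hpz).1
  obtain ⟨c, hc, hprop⟩ := habs pz xz hxz hpxz
  refine ⟨c, hc, fun p' q' hT hbar => ?_⟩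
  have hw : wedge q' zb := hzbw q' hbar
  have hpp : wedge p' pz := hTw n p' q' zb pz hT hw hpz
  obtain ⟨x', hx', hpx'⟩ := hn p' (hTsub n p' q' hT).1
  exact hprop p' x' hx' hpx' hpp

include hP hQ hC hD hRsub hTsub hRco hTco h1 h2 in
lemma arrow_all (k : ℕ) :
    IsArrow (interleave R T k) ∧ IsArrow (fun p q => interleave R T k q p) := by
  have hfin : {x : Q × P | interleave R T k x.1 x.2}.Finite := by
    by_cases hk : k % 2 = 0
    · refine Set.Finite.subset ((hD (k/2)).2.prod (hC (k/2)).2) ?_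
      intro x hx
      simp only [interleave, if_pos hk] at hx
      exact ⟨(hRsub _ _ _ hx).1, (hRsub _ _ _ hx).2⟩
    · refine Set.Finite.subset ((hD (k/2+1)).2.prod (hC (k/2)).2) ?_
      intro x hx
      simp only [interleave, if_neg hk] at hx
      exact ⟨(hTsub _ _ _ hx).2, (hTsub _ _ _ hx).1⟩
  have hfin' : {x : P × Q | interleave R T k x.2 x.1}.Finite := by
    have : {x : P × Q | interleave R T k x.2 x.1} = Prod.swap ⁻¹' {x : Q × P | interleave R T k x.1 x.2} := rfl
    rw [this]
    exact Set.Finite.preimage Prod.swap_injective.injOn hfin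
  constructor
  · refine ⟨hfin, fun p => ?_⟩
    by_cases hk : k % 2 = 0
    · obtain ⟨p', hp', hw⟩ := exists_cap_wedge hP (hC (k/2)).1 p
      obtain ⟨q, hq⟩ := hRco (k/2) p' hp'
      refine ⟨q, p', ?_, barwedge_of_wedge hP (wedge_symm hw)⟩
      simp only [interleave, if_pos hk]; exact hq
    · obtain ⟨p'', hp'', hw⟩ := exists_cap_wedge hP (hC (k/2+1)).1 p
      obtain ⟨q, hq⟩ := hRco (k/2+1) p'' hp''
      obtain ⟨p', hp'⟩ := hTco (k/2) q (by have := (hRsub _ _ _ hq).1; exact this)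
      have hle : p'' ≤ p' := h2 (k/2) p' q p'' hp' hq
      refine ⟨q, p', ?_, barwedge_mono (barwedge_of_wedge hP (wedge_symm hw)) hle⟩
      simp only [interleave, if_neg hk]; exact hp'
  · refine ⟨hfin', fun q => ?_⟩
    by_cases hk : k % 2 = 0
    · obtain ⟨q'', hq'', hw⟩ := exists_cap_wedge hQ (hD (k/2+1)).1 q
      obtain ⟨p, hp⟩ := hTco (k/2) q'' hq''
      obtain ⟨q', hq'⟩ := hRco (k/2) p (hTsub _ _ _ hp).1
      have hle : q'' ≤ q' := h1 (k/2) q' p q'' hq' hp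
      refine ⟨p, q', ?_, barwedge_mono (barwedge_of_wedge hQ (wedge_symm hw)) hle⟩
      simp only [interleave, if_pos hk]; exact hq'
    · obtain ⟨q', hq', hw⟩ := exists_cap_wedge hQ (hD (k/2+1)).1 q
      obtain ⟨p, hp⟩ := hTco (k/2) q' hq'
      refine ⟨p, q', ?_, barwedge_of_wedge hQ (wedge_symm hw)⟩
      simp only [interleave, if_neg hk]; exact hp

include hRsub hTsub hRco hTco h1 h2 in
lemma arrow_le_all (k : ℕ) : arrowLe (interleave R T (k + 1)) (interleave R T k) := by
  intro q p hA
  by_cases hk : k % 2 = 0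
  · have hk1 : (k+1) % 2 ≠ 0 := by omega
    have hdiv : (k+1)/2 = k/2 := by omega
    simp only [interleave, if_neg hk1, hdiv] at hA
    obtain ⟨q', hq'⟩ := hRco (k/2) p (hTsub _ _ _ hA).1
    refine ⟨q', p, h1 (k/2) q' p q hq' hA, le_rfl, ?_⟩
    simp only [interleave, if_pos hk]; exact hq'
  · have hk1 : (k+1) % 2 = 0 := by omega
    have hdiv : (k+1)/2 = k/2 + 1 := by omega
    simp only [interleave, if_pos hk1, hdiv] at hA
    obtain ⟨p', hp'⟩ := hTco (k/2) q (hRsub _ _ _ hA).1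
    refine ⟨q, p', le_rfl, h2 (k/2) p' q p hp' hA, ?_⟩
    simp only [interleave, if_neg hk]; exact hp'

include hP hregP hQ hregQ hC hDco hRsub hRw hRco in
lemma thin_forward :
    IsRefinerRel (fun (q : Q) (p : P) => ∃ k, angleRel (interleave R T k) q p) := by
  intro E hE
  obtain ⟨N, s1, hprop⟩ := starPQ hP hregP hQ hregQ C D hC hDco R hRsub hRw hRco hE
  refine ⟨level P s1, level_isCap s1, fun b hb => ?_⟩
  obtain ⟨c, hc, hstar⟩ := hprop b hb
  refine ⟨c, hc, 2*N, fun q' hq' => ?_⟩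
  obtain ⟨p', hbar, hA⟩ := hq'
  have h0 : (2*N) % 2 = 0 := by omega
  have h0' : (2*N) / 2 = N := by omega
  simp only [interleave, if_pos h0, h0'] at hA
  exact hstar q' p' hA hbar

include hP hregP hQ hregQ hD hCco hTsub hTw hTco in
lemma thin_backward :
    IsRefinerRel (fun (p : P) (q : Q) => ∃ k,
      angleRel (fun (p' : P) (q' : Q) => interleave R T k q' p') p q) := by
  intro E hE
  obtain ⟨n, s1, hprop⟩ := starQP hP hregP hQ hregQ C D hD hCco T hTsub hTw hTco hE
  refine ⟨level Q s1, level_isCap s1, fun b hb => ?_⟩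
  obtain ⟨c, hc, hstar⟩ := hprop b hb
  refine ⟨c, hc, 2*n+1, fun p' hp' => ?_⟩
  obtain ⟨q', hbar, hA⟩ := hp'
  have h0 : (2*n+1) % 2 ≠ 0 := by omega
  have h0' : (2*n+1) / 2 = n := by omega
  simp only [interleave, if_neg h0, h0'] at hA
  exact hstar p' q' hA hbar


include hP hC hRsub hTsub hRco hTco h1 h2 in
lemma branch_PQ {Sset : Set P} (hS : Sset ∈ Spec P) (N : ℕ) :
    ∃ f : ℕ → Q × P,
      (∀ n ≤ N, R n (f n).1 (f n).2 ∧ ∀ x ∈ Sset, wedge (f n).2 x) ∧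
      ∀ n < N, T n (f n).2 (f (n+1)).1 ∧ (f (n+1)).1 ≤ (f n).1 := by
  classical
  suffices h : ∀ (N : ℕ) (qp : Q × P), R N qp.1 qp.2 → (∀ x ∈ Sset, wedge qp.2 x) →
      ∃ f : ℕ → Q × P, ((∀ n ≤ N, R n (f n).1 (f n).2 ∧ ∀ x ∈ Sset, wedge (f n).2 x) ∧
        ∀ n < N, T n (f n).2 (f (n+1)).1 ∧ (f (n+1)).1 ≤ (f n).1) ∧ f N = qp by
    obtain ⟨p₀, hp₀S, hp₀C⟩ := hS.1 _ (hC N).1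
    obtain ⟨q₀, hq₀⟩ := hRco N p₀ hp₀C
    obtain ⟨f, hf, _⟩ := h N (q₀, p₀) hq₀ (fun x hx => spec_wedge hP hS hp₀S hx)
    exact ⟨f, hf⟩
  intro N
  induction N with
  | zero =>
    intro qp hR hw
    refine ⟨fun _ => qp, ⟨fun n hn => ?_, fun n hn => absurd hn (by omega)⟩, rfl⟩
    interval_cases n
    exact ⟨hR, hw⟩
  | succ N ih =>
    intro qp hR hw
    obtain ⟨p', hp'⟩ := hTco N qp.1 (hRsub (N+1) qp.1 qp.2 hR).1
    have hle : qp.2 ≤ p' := h2 N p' qp.1 qp.2 hp' hR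
    obtain ⟨q', hq'⟩ := hRco N p' (hTsub N p' qp.1 hp').1
    obtain ⟨f, ⟨hf1, hf2⟩, hfN⟩ := ih (q', p') hq' (fun x hx => wedge_mono_left (hw x hx) hle)
    refine ⟨Function.update f (N+1) qp, ⟨?_, ?_⟩, Function.update_self _ _ _⟩
    · intro n hn
      rcases Nat.eq_or_lt_of_le hn with rfl | hlt
      · rw [Function.update_self]
        exact ⟨hR, hw⟩
      · rw [Function.update_of_ne (by omega)]
        exact hf1 n (by omega)
    · intro n hn
      rcases Nat.lt_succ_iff_lt_or_eq.mp hn with h' | h'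
      · rw [Function.update_of_ne (by omega), Function.update_of_ne (by omega)]
        exact hf2 n h'
      · subst h'
        rw [Function.update_of_ne (by omega), Function.update_self, hfN]
        exact ⟨hp', h1 _ q' p' qp.1 hq' hp'⟩

include hP hQ hC hD hDco hRsub hTsub hRco hTco h1 h2 in
lemma match_PQ {Sset : Set P} (hS : Sset ∈ Spec P) :
    ∃ Tset ∈ Spec Q, seqGraphSet (interleave R T) Tset Sset := by
  obtain ⟨f, hfV, hfE⟩ := konig (fun n => {x : Q × P | R n x.1 x.2 ∧ ∀ s ∈ Sset, wedge x.2 s})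
    (fun n => Set.Finite.subset ((hD n).2.prod (hC n).2)
      (fun x hx => ⟨(hRsub n _ _ hx.1).1, (hRsub n _ _ hx.1).2⟩))
    (fun n x y => T n x.2 y.1 ∧ y.1 ≤ x.1)
    (fun N => branch_PQ hP C D hC R T hRsub hTsub hRco hTco h1 h2 hS N)
  set qs : ℕ → Q := fun n => (f n).1 with hqs
  set ps : ℕ → P := fun n => (f n).2 with hps
  have hqdec : ∀ k n, qs (n+k) ≤ qs n := by
    intro k
    induction k with
    | zero => intro n; exact le_rfl
    | succ k ih =>
      intro n
      exact le_trans (hfE (n+k)).2 (ih n)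
  have hUsel : IsSelector {q : Q | ∃ n, qs n ≤ q} := by
    intro E hE
    obtain ⟨m, hm⟩ := hDco E hE
    obtain ⟨e, heE, hle⟩ := hm (qs m) (hRsub m _ _ (hfV m).1).1
    exact ⟨e, ⟨m, hle⟩, heE⟩
  obtain ⟨M, hMU, hMspec⟩ := exists_minimal_selector hQ hUsel
  have hMw : ∀ n, ∀ t ∈ M, wedge (qs n) t := by
    intro n t ht
    obtain ⟨m, hle⟩ := hMU ht
    rcases le_total n m with h | h
    · refine ⟨qs m, ?_, hle⟩
      have := hqdec (m-n) n
      rwa [Nat.add_sub_cancel' h] at this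
    · refine wedge_of_le (le_trans ?_ hle)
      have := hqdec (n-m) m
      rwa [Nat.add_sub_cancel' h] at this
  refine ⟨M, hMspec, fun k => ?_⟩
  by_cases hk : k % 2 = 0
  · refine ⟨qs (k/2), ps (k/2), ?_, fun t ht => hMw _ t ht, fun s hs => (hfV (k/2)).2 s hs⟩
    simp only [interleave, if_pos hk]
    exact (hfV (k/2)).1
  · refine ⟨qs (k/2+1), ps (k/2), ?_, fun t ht => hMw _ t ht, fun s hs => (hfV (k/2)).2 s hs⟩
    simp only [interleave, if_neg hk]
    exact (hfE (k/2)).1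

include hQ hD hRsub hTsub hRco hTco h1 h2 in
lemma branch_QP {Tset : Set Q} (hT : Tset ∈ Spec Q) (N : ℕ) :
    ∃ f : ℕ → Q × P,
      (∀ n ≤ N, R n (f n).1 (f n).2 ∧ ∀ t ∈ Tset, wedge (f n).1 t) ∧
      ∀ n < N, T n (f n).2 (f (n+1)).1 ∧ (f (n+1)).2 ≤ (f n).2 := by
  classical
  suffices h : ∀ (N : ℕ) (qp : Q × P), R N qp.1 qp.2 → (∀ t ∈ Tset, wedge qp.1 t) →
      ∃ f : ℕ → Q × P, ((∀ n ≤ N, R n (f n).1 (f n).2 ∧ ∀ t ∈ Tset, wedge (f n).1 t) ∧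
        ∀ n < N, T n (f n).2 (f (n+1)).1 ∧ (f (n+1)).2 ≤ (f n).2) ∧ f N = qp by
    obtain ⟨q₁, hq₁T, hq₁D⟩ := hT.1 _ (hD (N+1)).1
    obtain ⟨p₀, hp₀⟩ := hTco N q₁ hq₁D
    obtain ⟨q₀, hq₀⟩ := hRco N p₀ (hTsub N p₀ q₁ hp₀).1
    have hle : q₁ ≤ q₀ := h1 N q₀ p₀ q₁ hq₀ hp₀
    obtain ⟨f, hf, _⟩ := h N (q₀, p₀) hq₀
      (fun t ht => wedge_mono_left (spec_wedge hQ hT hq₁T ht) hle)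
    exact ⟨f, hf⟩
  intro N
  induction N with
  | zero =>
    intro qp hR hw
    refine ⟨fun _ => qp, ⟨fun n hn => ?_, fun n hn => absurd hn (by omega)⟩, rfl⟩
    interval_cases n
    exact ⟨hR, hw⟩
  | succ N ih =>
    intro qp hR hw
    obtain ⟨p', hp'⟩ := hTco N qp.1 (hRsub (N+1) qp.1 qp.2 hR).1
    have hle : qp.2 ≤ p' := h2 N p' qp.1 qp.2 hp' hR
    obtain ⟨q', hq'⟩ := hRco N p' (hTsub N p' qp.1 hp').1
    have hle2 : qp.1 ≤ q' := h1 N q' p' qp.1 hq' hp'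
    obtain ⟨f, ⟨hf1, hf2⟩, hfN⟩ := ih (q', p') hq' (fun t ht => wedge_mono_left (hw t ht) hle2)
    refine ⟨Function.update f (N+1) qp, ⟨?_, ?_⟩, Function.update_self _ _ _⟩
    · intro n hn
      rcases Nat.eq_or_lt_of_le hn with rfl | hlt
      · rw [Function.update_self]
        exact ⟨hR, hw⟩
      · rw [Function.update_of_ne (by omega)]
        exact hf1 n (by omega)
    · intro n hn
      rcases Nat.lt_succ_iff_lt_or_eq.mp hn with h' | h'
      · rw [Function.update_of_ne (by omega), Function.update_of_ne (by omega)]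
        exact hf2 n h'
      · subst h'
        rw [Function.update_of_ne (by omega), Function.update_self, hfN]
        exact ⟨hp', hle⟩

include hP hQ hC hD hCco hRsub hTsub hRco hTco h1 h2 in
lemma match_QP {Tset : Set Q} (hT : Tset ∈ Spec Q) :
    ∃ Sset ∈ Spec P, seqGraphSet (interleave R T) Tset Sset := by
  obtain ⟨f, hfV, hfE⟩ := konig (fun n => {x : Q × P | R n x.1 x.2 ∧ ∀ t ∈ Tset, wedge x.1 t})
    (fun n => Set.Finite.subset ((hD n).2.prod (hC n).2)
      (fun x hx => ⟨(hRsub n _ _ hx.1).1, (hRsub n _ _ hx.1).2⟩))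
    (fun n x y => T n x.2 y.1 ∧ y.2 ≤ x.2)
    (fun N => branch_QP hQ C D hD R T hRsub hTsub hRco hTco h1 h2 hT N)
  set qs : ℕ → Q := fun n => (f n).1 with hqs
  set ps : ℕ → P := fun n => (f n).2 with hps
  have hpdec : ∀ k n, ps (n+k) ≤ ps n := by
    intro k
    induction k with
    | zero => intro n; exact le_rfl
    | succ k ih =>
      intro n
      exact le_trans (hfE (n+k)).2 (ih n)
  have hUsel : IsSelector {p : P | ∃ n, ps n ≤ p} := by
    intro E hE
    obtain ⟨m, hm⟩ := hCco E hE
    obtain ⟨e, heE, hle⟩ := hm (ps m) (hRsub m _ _ (hfV m).1).2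
    exact ⟨e, ⟨m, hle⟩, heE⟩
  obtain ⟨M, hMU, hMspec⟩ := exists_minimal_selector hP hUsel
  have hMw : ∀ n, ∀ s ∈ M, wedge (ps n) s := by
    intro n s hs
    obtain ⟨m, hle⟩ := hMU hs
    rcases le_total n m with h | h
    · refine ⟨ps m, ?_, hle⟩
      have := hpdec (m-n) n
      rwa [Nat.add_sub_cancel' h] at this
    · refine wedge_of_le (le_trans ?_ hle)
      have := hpdec (n-m) m
      rwa [Nat.add_sub_cancel' h] at this
  refine ⟨M, hMspec, fun k => ?_⟩
  by_cases hk : k % 2 = 0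
  · refine ⟨qs (k/2), ps (k/2), ?_, fun t ht => (hfV (k/2)).2 t ht, fun s hs => hMw _ s hs⟩
    simp only [interleave, if_pos hk]
    exact (hfV (k/2)).1
  · refine ⟨qs (k/2+1), ps (k/2), ?_, fun t ht => (hfV (k/2+1)).2 t ht, fun s hs => hMw _ s hs⟩
    simp only [interleave, if_neg hk]
    exact (hfE (k/2)).1

include hP hregP hQ hregQ hC hDco hRsub hRw hRco in
lemma core_forward {E : Set Q} (hE : IsCap E) {S₀ : Set P} (hS₀ : S₀ ∈ Spec P) :
    ∃ b ∈ S₀, ∃ c ∈ E, ∀ Sset, Sset ∈ Spec P → b ∈ Sset →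
      ∀ Tset, Tset ∈ Spec Q → seqGraphSet (interleave R T) Tset Sset → c ∈ Tset := by
  obtain ⟨N, s1, hprop⟩ := starPQ hP hregP hQ hregQ C D hC hDco R hRsub hRw hRco hE
  obtain ⟨b, hbS, hbl⟩ := hS₀.1 _ (level_isCap s1)
  obtain ⟨c, hcE, hstar⟩ := hprop b hbl
  refine ⟨b, hbS, c, hcE, ?_⟩
  intro Sset hSspec hbmem Tset hTspec hgraph
  obtain ⟨q, p, hA, hTq, hSp⟩ := hgraph (2*N)
  have h0 : (2*N) % 2 = 0 := by omega
  have h0' : (2*N) / 2 = N := by omega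
  simp only [interleave, if_pos h0, h0'] at hA
  have hbar : barwedge b p := spec_barwedge hP hSspec hbmem (fun x hx => hSp hx)
  have hsb : starBelow q c := hstar q p hA hbar
  exact spec_mem_of_starBelow hTspec (fun x hx => hTq hx) hsb

include hP hregP hQ hregQ hD hCco hTsub hTw hTco in
lemma core_backward {E : Set P} (hE : IsCap E) {T₀ : Set Q} (hT₀ : T₀ ∈ Spec Q) :
    ∃ b ∈ T₀, ∃ c ∈ E, ∀ Tset, Tset ∈ Spec Q → b ∈ Tset →
      ∀ Sset, Sset ∈ Spec P → seqGraphSet (interleave R T) Tset Sset → c ∈ Sset := by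
  obtain ⟨n, s1, hprop⟩ := starQP hP hregP hQ hregQ C D hD hCco T hTsub hTw hTco hE
  obtain ⟨b, hbT, hbl⟩ := hT₀.1 _ (level_isCap s1)
  obtain ⟨c, hcE, hstar⟩ := hprop b hbl
  refine ⟨b, hbT, c, hcE, ?_⟩
  intro Tset hTspec hbmem Sset hSspec hgraph
  obtain ⟨q, p, hA, hTq, hSp⟩ := hgraph (2*n+1)
  have h0 : (2*n+1) % 2 ≠ 0 := by omega
  have h0' : (2*n+1) / 2 = n := by omega
  simp only [interleave, if_neg h0, h0'] at hA
  have hbar : barwedge b q := spec_barwedge hQ hTspec hbmem (fun x hx => hTq hx)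
  have hsb : starBelow p c := hstar p q hA hbar
  exact spec_mem_of_starBelow hSspec (fun x hx => hSp hx) hsb

include hP hregP hQ hregQ hC hDco hRsub hRw hRco in
lemma uniq_T {Sset : Set P} (hS : Sset ∈ Spec P) {T₁ T₂ : Set Q}
    (h₁ : T₁ ∈ Spec Q) (h₂ : T₂ ∈ Spec Q)
    (hg₁ : seqGraphSet (interleave R T) T₁ Sset) (hg₂ : seqGraphSet (interleave R T) T₂ Sset) :
    T₁ = T₂ := by
  have hsel : IsSelector (T₁ ∩ T₂) := by
    intro E hE
    obtain ⟨b, hbS, c, hcE, hprop⟩ :=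
      core_forward hP hregP hQ hregQ C D hC hDco R T hRsub hRw hRco hE hS
    exact ⟨c, ⟨hprop Sset hS hbS T₁ h₁ hg₁, hprop Sset hS hbS T₂ h₂ hg₂⟩, hcE⟩
  have e₁ := h₁.2 _ Set.inter_subset_left hsel
  have e₂ := h₂.2 _ Set.inter_subset_right hsel
  exact e₁.symm.trans e₂

include hP hregP hQ hregQ hD hCco hTsub hTw hTco in
lemma uniq_S {Tset : Set Q} (hT : Tset ∈ Spec Q) {S₁ S₂ : Set P}
    (h₁ : S₁ ∈ Spec P) (h₂ : S₂ ∈ Spec P)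
    (hg₁ : seqGraphSet (interleave R T) Tset S₁) (hg₂ : seqGraphSet (interleave R T) Tset S₂) :
    S₁ = S₂ := by
  have hsel : IsSelector (S₁ ∩ S₂) := by
    intro E hE
    obtain ⟨b, hbT, c, hcE, hprop⟩ :=
      core_backward hP hregP hQ hregQ C D hD hCco R T hTsub hTw hTco hE hT
    exact ⟨c, ⟨hprop Tset hT hbT S₁ h₁ hg₁, hprop Tset hT hbT S₂ h₂ hg₂⟩, hcE⟩
  have e₁ := h₁.2 _ Set.inter_subset_left hsel
  have e₂ := h₂.2 _ Set.inter_subset_right hsel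
  exact e₁.symm.trans e₂

end Main

end OP

open OP in
/-- Back-and-forth lemma: interleaving the given relations yields a bi-thin
arrow-sequence, and hence a homeomorphism `SP ≅ SQ`. -/
theorem stmt12 {P Q : Type*} [PartialOrder P] [PartialOrder Q]
    (hP : IsOmegaPoset P) (hregP : IsRegular P) (hQ : IsOmegaPoset Q) (hregQ : IsRegular Q)
    (C : ℕ → Set P) (D : ℕ → Set Q)
    (hC : ∀ n, IsCap (C n) ∧ (C n).Finite) (hD : ∀ n, IsCap (D n) ∧ (D n).Finite)
    (hCco : ∀ B : Set P, IsCap B → ∃ n, refines (C n) B)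
    (hDco : ∀ B : Set Q, IsCap B → ∃ n, refines (D n) B)
    (R : ℕ → Q → P → Prop) (T : ℕ → P → Q → Prop)
    (hRsub : ∀ n q p, R n q p → q ∈ D n ∧ p ∈ C n)
    (hTsub : ∀ n p q, T n p q → p ∈ C n ∧ q ∈ D (n + 1))
    (hRw : ∀ n, WedgePres (R n)) (hTw : ∀ n, WedgePres (T n))
    (hRco : ∀ n, ∀ p ∈ C n, ∃ q, R n q p)
    (hTco : ∀ n, ∀ q ∈ D (n + 1), ∃ p, T n p q)
    (h1 : ∀ n q p q', R n q p → T n p q' → q' ≤ q)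
    (h2 : ∀ n p q p', T n p q → R (n + 1) q p' → p' ≤ p) :
    (∀ k, IsArrow (interleave R T k) ∧ IsArrow (fun p q => interleave R T k q p)) ∧
    (∀ k, arrowLe (interleave R T (k + 1)) (interleave R T k)) ∧
    IsRefinerRel (fun (q : Q) (p : P) => ∃ k, angleRel (interleave R T k) q p) ∧
    IsRefinerRel (fun (p : P) (q : Q) => ∃ k,
      angleRel (fun (p' : P) (q' : Q) => interleave R T k q' p') p q) ∧
    ∃ f : SpecT P ≃ₜ SpecT Q, ∀ (S : SpecT P) (k : ℕ), ∃ q p,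
      interleave R T k q p ∧ (f S).1 ⊆ wedgeSet q ∧ S.1 ⊆ wedgeSet p := by
  classical
  refine ⟨fun k => arrow_all hP hQ C D hC hD R T hRsub hTsub hRco hTco h1 h2 k,
    fun k => arrow_le_all C D R T hRsub hTsub hRco hTco h1 h2 k,
    thin_forward hP hregP hQ hregQ C D hC hDco R T hRsub hRw hRco,
    thin_backward hP hregP hQ hregQ C D hD hCco R T hTsub hTw hTco, ?_⟩
  -- construct the homeomorphism
  choose fT hfT1 hfT2 using fun (S : SpecT P) =>
    match_PQ hP hQ C D hC hD hDco R T hRsub hTsub hRco hTco h1 h2 S.2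
  choose gS hgS1 hgS2 using fun (Tt : SpecT Q) =>
    match_QP hP hQ C D hC hD hCco R T hRsub hTsub hRco hTco h1 h2 Tt.2
  set F : SpecT P → SpecT Q := fun S => ⟨fT S, hfT1 S⟩ with hF
  set G : SpecT Q → SpecT P := fun Tt => ⟨gS Tt, hgS1 Tt⟩ with hG
  have hleft : ∀ S : SpecT P, G (F S) = S := by
    intro S
    apply Subtype.ext
    exact uniq_S hP hregP hQ hregQ C D hD hCco R T hTsub hTw hTco (hfT1 S)
      (hgS1 (F S)) S.2 (hgS2 (F S)) (hfT2 S)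
  have hright : ∀ Tt : SpecT Q, F (G Tt) = Tt := by
    intro Tt
    apply Subtype.ext
    exact uniq_T hP hregP hQ hregQ C D hC hDco R T hRsub hRw hRco (hgS1 Tt)
      (hfT1 (G Tt)) Tt.2 (hfT2 (G Tt)) (hgS2 Tt)
  have hopenP : ∀ A : Set (SpecT P),
      (∀ x ∈ A, ∃ p : P, p ∈ x.1 ∧ ∀ y : SpecT P, p ∈ y.1 → y ∈ A) → IsOpen A := by
    intro A h
    rw [isOpen_iff_forall_mem_open]
    intro x hx
    obtain ⟨p, hpx, hp⟩ := h x hx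
    exact ⟨{S : SpecT P | p ∈ S.1}, fun y hy => hp y hy,
      TopologicalSpace.GenerateOpen.basic _ ⟨p, rfl⟩, hpx⟩
  have hopenQ : ∀ A : Set (SpecT Q),
      (∀ x ∈ A, ∃ q : Q, q ∈ x.1 ∧ ∀ y : SpecT Q, q ∈ y.1 → y ∈ A) → IsOpen A := by
    intro A h
    rw [isOpen_iff_forall_mem_open]
    intro x hx
    obtain ⟨q, hqx, hq⟩ := h x hx
    exact ⟨{S : SpecT Q | q ∈ S.1}, fun y hy => hq y hy,
      TopologicalSpace.GenerateOpen.basic _ ⟨q, rfl⟩, hqx⟩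
  have hcontF : Continuous F := by
    rw [continuous_generateFrom_iff]
    rintro U ⟨q₀, rfl⟩
    apply hopenP
    intro S₀ hS₀mem
    obtain ⟨E, hEcap, hEnec⟩ := spec_necessity (hfT1 S₀) hS₀mem
    obtain ⟨b, hbS₀, c, hcE, hprop⟩ :=
      core_forward hP hregP hQ hregQ C D hC hDco R T hRsub hRw hRco hEcap S₀.2
    have hc0 : c = q₀ := hEnec c (hprop S₀.1 S₀.2 hbS₀ (fT S₀) (hfT1 S₀) (hfT2 S₀)) hcE
    refine ⟨b, hbS₀, fun y hy => ?_⟩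
    have hcy := hprop y.1 y.2 hy (fT y) (hfT1 y) (hfT2 y)
    rw [hc0] at hcy
    exact hcy
  have hcontG : Continuous G := by
    rw [continuous_generateFrom_iff]
    rintro U ⟨p₀, rfl⟩
    apply hopenQ
    intro T₀ hT₀mem
    obtain ⟨E, hEcap, hEnec⟩ := spec_necessity (hgS1 T₀) hT₀mem
    obtain ⟨b, hbT₀, c, hcE, hprop⟩ :=
      core_backward hP hregP hQ hregQ C D hD hCco R T hTsub hTw hTco hEcap T₀.2
    have hc0 : c = p₀ := hEnec c (hprop T₀.1 T₀.2 hbT₀ (gS T₀) (hgS1 T₀) (hgS2 T₀)) hcE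
    refine ⟨b, hbT₀, fun y hy => ?_⟩
    have hcy := hprop y.1 y.2 hy (gS y) (hgS1 y) (hgS2 y)
    rw [hc0] at hcy
    exact hcy
  refine ⟨⟨⟨F, G, hleft, hright⟩, hcontF, hcontG⟩, ?_⟩
  intro S k
  exact hfT2 S k
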